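/- Let K be a field of characteristic p > 0 with p ≤ n. Then the multisymmetric polynomial [x(1)···x(m)] = Σ_{j=1}^n x(1)_j···x(m)_j is indecomposable in K[V^m]^{S_n}, i.e. it cannot be written as a polynomial in S_n-invariants of strictly lower degree, for m ≥ 2. -/

import Mathlib

open MvPolynomial

/-- `f` is invariant under the `S_n`-action permuting the index `j`. -/
def IsMultiSymm {K : Type*} [CommRing K] {m n : ℕ} (f : MvPolynomial (Fin m × Fin n) K) :
    Prop :=
  ∀ σ : Equiv.Perm (Fin n), rename (fun p : Fin m × Fin n => (p.1, σ p.2)) f = f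

namespace TraceAux

open Finset

variable {K : Type*} [CommRing K] {m n : ℕ}

/-- The squarefree multilinear exponent with support `{(i, κ i) | i ∈ S}`. -/
noncomputable def Dc (S : Finset (Fin m)) (κ : Fin m → Fin n) : (Fin m × Fin n) →₀ ℕ :=
  ∑ i ∈ S, Finsupp.single (i, κ i) 1

lemma Dc_apply (S : Finset (Fin m)) (κ : Fin m → Fin n) (q : Fin m × Fin n) :
    Dc S κ q = if q.1 ∈ S ∧ q.2 = κ q.1 then 1 else 0 := by
  classical
  obtain ⟨a, b⟩ := q
  rw [Dc, Finset.sum_apply']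
  have h1 : ∀ i ∈ S, (Finsupp.single ((i, κ i) : Fin m × Fin n) 1) (a, b)
      = if i = a then (if b = κ a then 1 else 0) else 0 := by
    intro i _
    rw [Finsupp.single_apply]
    by_cases h : i = a
    · subst h
      by_cases h2 : b = κ i <;> simp [h2, Prod.ext_iff, eq_comm]
    · simp [h, Prod.ext_iff]
  rw [Finset.sum_congr rfl h1, Finset.sum_ite_eq' S a]
  by_cases ha : a ∈ S <;> simp [ha]

lemma Dc_apply_self (S : Finset (Fin m)) (κ : Fin m → Fin n) (i : Fin m) :
    Dc S κ (i, κ i) = if i ∈ S then 1 else 0 := by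
  rw [Dc_apply]; simp

lemma Dc_congr {S : Finset (Fin m)} {κ κ' : Fin m → Fin n} (h : ∀ i ∈ S, κ i = κ' i) :
    Dc S κ = Dc S κ' :=
  Finset.sum_congr rfl (fun i hi => by rw [h i hi])

lemma Dc_empty (κ : Fin m → Fin n) : Dc (∅ : Finset (Fin m)) κ = 0 :=
  Finset.sum_empty

lemma Dc_add_compl (S : Finset (Fin m)) (κ : Fin m → Fin n) :
    Dc S κ + Dc Sᶜ κ = Dc univ κ := by
  simp only [Dc]
  exact Finset.sum_add_sum_compl S _

lemma Dc_univ_inj {κ κ' : Fin m → Fin n} (h : Dc univ κ = Dc univ κ') : κ = κ' := by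
  funext i
  have h2 := congrArg (fun d => d (i, κ i)) h
  simp only [Dc_apply_self, Dc_apply, mem_univ, if_pos, true_and] at h2
  by_cases hc : κ i = κ' i
  · exact hc
  · rw [if_neg hc] at h2
    exact absurd h2 one_ne_zero

lemma mapDomain_Dc (σ : Equiv.Perm (Fin n)) (S : Finset (Fin m)) (κ : Fin m → Fin n) :
    Finsupp.mapDomain (fun q : Fin m × Fin n => (q.1, σ q.2)) (Dc S κ)
      = Dc S (fun i => σ (κ i)) := by
  rw [Dc, Finsupp.mapDomain_finset_sum]
  exact Finset.sum_congr rfl fun i _ => Finsupp.mapDomain_single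

lemma coeff_invariant {f : MvPolynomial (Fin m × Fin n) K} (hf : IsMultiSymm f)
    (σ : Equiv.Perm (Fin n)) (S : Finset (Fin m)) (κ : Fin m → Fin n) :
    f.coeff (Dc S (fun i => σ (κ i))) = f.coeff (Dc S κ) := by
  conv_lhs => rw [← hf σ, ← mapDomain_Dc]
  apply coeff_rename_mapDomain
  intro q q' hqq
  simp only [Prod.mk.injEq] at hqq
  exact Prod.ext hqq.1 (σ.injective hqq.2)

lemma coeff_mul_Dc (f g : MvPolynomial (Fin m × Fin n) K) (κ : Fin m → Fin n) :
    (f * g).coeff (Dc univ κ) = ∑ S : Finset (Fin m), f.coeff (Dc S κ) * g.coeff (Dc Sᶜ κ) := by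
  classical
  rw [coeff_mul]
  refine (Finset.sum_bij' (fun S _ => ((Dc S κ, Dc Sᶜ κ) : ((Fin m × Fin n) →₀ ℕ) × _))
    (fun b _ => Finset.univ.filter (fun i => b.1 (i, κ i) ≠ 0)) ?_ ?_ ?_ ?_ ?_).symm
  · intro S _
    rw [Finset.HasAntidiagonal.mem_antidiagonal]
    exact Dc_add_compl S κ
  · intro b _
    exact Finset.mem_univ _
  · intro S _
    ext i
    simp only [Finset.mem_filter, mem_univ, true_and, Dc_apply_self]
    by_cases hi : i ∈ S <;> simp [hi]
  · intro b hb
    rw [Finset.HasAntidiagonal.mem_antidiagonal] at hb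
    have hval : ∀ q : Fin m × Fin n, b.1 q + b.2 q = Dc univ κ q := by
      intro q
      rw [← hb, Finsupp.add_apply]
    have key : ∀ q : Fin m × Fin n,
        (Dc (Finset.univ.filter (fun i => b.1 (i, κ i) ≠ 0)) κ) q = b.1 q := by
      intro q
      obtain ⟨a, c⟩ := q
      have hv := hval (a, c)
      rw [Dc_apply] at hv ⊢
      simp only [mem_univ, true_and, Finset.mem_filter] at hv ⊢
      by_cases hc : c = κ a
      · subst hc
        rw [if_pos rfl] at hv
        by_cases hz : b.1 (a, κ a) = 0
        · rw [if_neg (by simp [hz]), hz]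
        · rw [if_pos ⟨hz, rfl⟩]
          omega
      · rw [if_neg (by simp [hc])] at hv
        rw [if_neg (by simp [hc])]
        omega
    have h1 : Dc (Finset.univ.filter (fun i => b.1 (i, κ i) ≠ 0)) κ = b.1 :=
      Finsupp.ext key
    have h2 : Dc (Finset.univ.filter (fun i => b.1 (i, κ i) ≠ 0))ᶜ κ = b.2 := by
      apply Finsupp.ext
      intro q
      have e1 := hval q
      have e2 : Dc (Finset.univ.filter (fun i => b.1 (i, κ i) ≠ 0)) κ q
          + Dc (Finset.univ.filter (fun i => b.1 (i, κ i) ≠ 0))ᶜ κ q = Dc univ κ q := by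
        rw [← Dc_add_compl (Finset.univ.filter (fun i => b.1 (i, κ i) ≠ 0)) κ,
          Finsupp.add_apply]
      have e3 := key q
      omega
    exact Prod.ext h1 h2
  · intro S _
    rfl

lemma prod_X_eq (S : Finset (Fin m)) (κ : Fin m → Fin n) :
    (∏ i ∈ S, (X (i, κ i) : MvPolynomial (Fin m × Fin n) K)) = monomial (Dc S κ) 1 := by
  classical
  induction S using Finset.induction with
  | empty => simp [Dc_empty]
  | insert _ _ h ih =>
    rw [Finset.prod_insert h, ih, X, monomial_mul, one_mul]
    simp only [Dc]
    rw [Finset.sum_insert h]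

end TraceAux

open TraceAux Finset

/-- Let `K` be a field of characteristic `p` with `0 < p ≤ n` and `m ≥ 2`. Then the
multisymmetric polynomial `[x(1)⋯x(m)] = ∑_{j=1}^n x(1)_j ⋯ x(m)_j` is indecomposable in
`K[V^m]^{S_n}`: it does not lie in the square of the ideal of `K[V^m]^{S_n}` spanned by
the homogeneous invariants of positive degree (equivalently, it cannot be written as a
polynomial in invariants of strictly lower degree). -/
theorem traceMonomial_indecomposable
    (K : Type*) [Field K] (m n p : ℕ) [CharP K p] (hp : 0 < p) (hpn : p ≤ n)
    (hm : 2 ≤ m) :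
    (∑ j : Fin n, ∏ i : Fin m, X (i, j) : MvPolynomial (Fin m × Fin n) K) ∉
      Submodule.span K {h : MvPolynomial (Fin m × Fin n) K |
        ∃ f g, IsMultiSymm f ∧ IsMultiSymm g ∧
          constantCoeff f = 0 ∧ constantCoeff g = 0 ∧ h = f * g} := by
  classical
  haveI : NeZero p := ⟨hp.ne'⟩
  haveI : NeZero m := ⟨by omega⟩
  -- the embedding of `ZMod p` into the first `p` columns
  set ι : ZMod p → Fin n := fun a => ⟨a.val, lt_of_lt_of_le (ZMod.val_lt a) hpn⟩ with hι
  have ιinj : Function.Injective ι := by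
    intro a b hab
    have : a.val = b.val := congrArg Fin.val hab
    exact ZMod.val_injective p this
  -- the equivalence onto the first `p` columns
  let e : ZMod p ≃ {x : Fin n // x.val < p} :=
    { toFun := fun a => ⟨ι a, ZMod.val_lt a⟩
      invFun := fun x => (x.1.val : ZMod p)
      left_inv := by
        intro a
        simp only [hι]
        exact ZMod.natCast_rightInverse a
      right_inv := by
        intro x
        apply Subtype.ext
        apply Fin.ext
        simp only [hι]
        exact ZMod.val_cast_of_lt x.2 }
  -- the cyclic shift on the first `p` columns
  set τ : ZMod p → Equiv.Perm (Fin n) := fun k => (Equiv.addRight k).extendDomain e with hτdef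
  have hτ : ∀ k a, τ k (ι a) = ι (a + k) := by
    intro k a
    have h := Equiv.Perm.extendDomain_apply_image (Equiv.addRight k) e a
    exact h
  -- the linear functional
  set Λ : MvPolynomial (Fin m × Fin n) K → K := fun h =>
    ∑ j : Fin m → ZMod p, if j 0 = 0 then h.coeff (Dc univ (fun i => ι (j i))) else 0 with hΛ
  intro hmem
  -- Λ vanishes on the span
  have hvanish : Λ (∑ j : Fin n, ∏ i : Fin m, X (i, j) : MvPolynomial (Fin m × Fin n) K) = 0 := by
    refine Submodule.span_induction (p := fun x _ => Λ x = 0) ?_ ?_ ?_ ?_ hmem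
    · rintro x ⟨f, g, hf, hg, hcf, hcg, rfl⟩
      show Λ (f * g) = 0
      simp only [hΛ]
      have expand : ∀ j : Fin m → ZMod p,
          (if j 0 = 0 then (f * g).coeff (Dc univ (fun i => ι (j i))) else 0)
          = ∑ S : Finset (Fin m),
              (if j 0 = 0 then
                f.coeff (Dc S (fun i => ι (j i))) * g.coeff (Dc Sᶜ (fun i => ι (j i)))
              else 0) := by
        intro j
        by_cases hj : j 0 = 0
        · rw [if_pos hj, coeff_mul_Dc]
          exact Finset.sum_congr rfl fun S _ => (if_pos hj).symm
        · simp [hj]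
      rw [Finset.sum_congr rfl fun j _ => expand j, Finset.sum_comm]
      apply Finset.sum_eq_zero
      intro S _
      have hf0 : f.coeff 0 = 0 := by rw [← constantCoeff_eq]; exact hcf
      have hg0 : g.coeff 0 = 0 := by rw [← constantCoeff_eq]; exact hcg
      -- per-subset vanishing
      by_cases hSempty : S = ∅
      · apply Finset.sum_eq_zero
        intro j _
        rw [hSempty, Dc_empty, hf0, zero_mul]
        exact ite_self 0
      by_cases hSuniv : S = univ
      · apply Finset.sum_eq_zero
        intro j _
        rw [hSuniv, compl_univ, Dc_empty, hg0, mul_zero]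
        exact ite_self 0
      -- now S and Sᶜ are both nonempty; shift on the side not containing 0
      obtain ⟨T, hT0, hTne, hTside⟩ :
          ∃ T : Finset (Fin m), (0 : Fin m) ∉ T ∧ T.Nonempty ∧ (T = S ∨ T = Sᶜ) := by
        by_cases h0 : (0 : Fin m) ∈ S
        · refine ⟨Sᶜ, by simp [h0],
            Finset.nonempty_iff_ne_empty.2 (fun hc => hSuniv ?_), Or.inr rfl⟩
          have h3 := congrArg (·ᶜ) hc
          simpa using h3
        · exact ⟨S, h0, Finset.nonempty_iff_ne_empty.2 hSempty, Or.inl rfl⟩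
      obtain ⟨i₀, hi₀⟩ := hTne
      set P : (Fin m → ZMod p) → K := fun j =>
        if j 0 = 0 then
          f.coeff (Dc S (fun i => ι (j i))) * g.coeff (Dc Sᶜ (fun i => ι (j i)))
        else 0 with hP
      show ∑ j : Fin m → ZMod p, P j = 0
      -- invariance of P under the shift on T
      have hPinv : ∀ (k : ZMod p) (j : Fin m → ZMod p),
          P (fun i => if i ∈ T then j i + k else j i) = P j := by
        intro k j
        simp only [hP]
        rw [if_neg hT0]
        by_cases hj : j 0 = 0
        · rw [if_pos hj, if_pos hj]
          have hfix : ∀ (U : Finset (Fin m)), Disjoint U T →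
              Dc U (fun i => ι (if i ∈ T then j i + k else j i)) = Dc U (fun i => ι (j i)) := by
            intro U hU
            apply Dc_congr
            intro i hi
            rw [if_neg (Finset.disjoint_left.mp hU hi)]
          have hshift : ∀ (U : Finset (Fin m)), U ⊆ T →
              ∀ (h : MvPolynomial (Fin m × Fin n) K), IsMultiSymm h →
              h.coeff (Dc U (fun i => ι (if i ∈ T then j i + k else j i)))
                = h.coeff (Dc U (fun i => ι (j i))) := by
            intro U hU h hsym
            have hDc : Dc U (fun i => ι (if i ∈ T then j i + k else j i))
                = Dc U (fun i => τ k (ι (j i))) := by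
              apply Dc_congr
              intro i hi
              rw [if_pos (hU hi), hτ]
            rw [hDc]
            exact coeff_invariant hsym (τ k) U (fun i => ι (j i))
          rcases hTside with hTS | hTS
          · rw [hshift S (by rw [hTS]) f hf,
              hfix Sᶜ (by rw [hTS]; exact disjoint_compl_left) ]
          · rw [hshift Sᶜ (by rw [hTS]) g hg,
              hfix S (by rw [hTS]; exact disjoint_compl_right)]
        · rw [if_neg hj, if_neg hj]
      -- now the sum over j is p times a constant, hence 0
      have hsplit : ∑ j : Fin m → ZMod p, P j
          = ∑ k : ZMod p, ∑ j : Fin m → ZMod p, (if j i₀ = k then P j else 0) := by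
        rw [Finset.sum_comm]
        apply Finset.sum_congr rfl
        intro j _
        rw [Finset.sum_ite_eq univ (j i₀) (fun _ => P j)]
        simp
      have hconst : ∀ k : ZMod p, ∑ j : Fin m → ZMod p, (if j i₀ = k then P j else 0)
          = ∑ j : Fin m → ZMod p, (if j i₀ = 0 then P j else 0) := by
        intro k
        refine (Fintype.sum_equiv
          (Equiv.piCongrRight fun i =>
            if i ∈ T then Equiv.addRight k else Equiv.refl (ZMod p))
          (fun j => if j i₀ = 0 then P j else 0)
          (fun j => if j i₀ = k then P j else 0) ?_).symm
        intro j
        have hej : (Equiv.piCongrRight fun i =>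
            if i ∈ T then Equiv.addRight k else Equiv.refl (ZMod p)) j
            = fun i => if i ∈ T then j i + k else j i := by
          funext i
          by_cases hi : i ∈ T <;> simp [Equiv.piCongrRight, hi]
        simp only [hej]
        rw [hPinv k j, if_pos hi₀]
        by_cases hji : j i₀ = 0
        · rw [if_pos hji, if_pos (by rw [hji, zero_add])]
        · rw [if_neg hji, if_neg (fun hc => hji (by rwa [add_eq_right] at hc))]
      calc ∑ j : Fin m → ZMod p, P j
          = ∑ k : ZMod p, ∑ j : Fin m → ZMod p, (if j i₀ = 0 then P j else 0) := by
            rw [hsplit]; exact Finset.sum_congr rfl fun k _ => hconst k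
        _ = (p : K) * ∑ j : Fin m → ZMod p, (if j i₀ = 0 then P j else 0) := by
            rw [Finset.sum_const, card_univ, ZMod.card, nsmul_eq_mul]
        _ = 0 := by rw [CharP.cast_eq_zero K p, zero_mul]
    · show Λ 0 = 0
      simp only [hΛ]
      apply Finset.sum_eq_zero
      intro j _
      simp [MvPolynomial.coeff_zero]
    · intro x y _ _ hx hy
      show Λ (x + y) = 0
      simp only [hΛ] at hx hy ⊢
      have hterm : ∀ j : Fin m → ZMod p,
          (if j 0 = 0 then (x + y).coeff (Dc univ (fun i => ι (j i))) else 0)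
          = (if j 0 = 0 then x.coeff (Dc univ (fun i => ι (j i))) else 0)
            + (if j 0 = 0 then y.coeff (Dc univ (fun i => ι (j i))) else 0) := by
        intro j
        by_cases hj : j 0 = 0 <;> simp [hj, MvPolynomial.coeff_add]
      rw [Finset.sum_congr rfl fun j _ => hterm j, Finset.sum_add_distrib, hx, hy, add_zero]
    · intro a x _ hx
      show Λ (a • x) = 0
      simp only [hΛ] at hx ⊢
      have hterm : ∀ j : Fin m → ZMod p,
          (if j 0 = 0 then (a • x).coeff (Dc univ (fun i => ι (j i))) else 0)
          = a * (if j 0 = 0 then x.coeff (Dc univ (fun i => ι (j i))) else 0) := by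
        intro j
        by_cases hj : j 0 = 0 <;> simp [hj, MvPolynomial.coeff_smul]
      rw [Finset.sum_congr rfl fun j _ => hterm j, ← Finset.mul_sum, hx, mul_zero]
  -- Λ of the trace monomial is 1
  have hone : Λ (∑ j : Fin n, ∏ i : Fin m, X (i, j) : MvPolynomial (Fin m × Fin n) K) = 1 := by
    simp only [hΛ]
    have hcoeff : ∀ κ : Fin m → Fin n,
        (∑ jc : Fin n, ∏ i : Fin m, X (i, jc) : MvPolynomial (Fin m × Fin n) K).coeff (Dc univ κ)
        = ∑ jc : Fin n, if Dc univ (fun _ => jc) = Dc univ κ then (1 : K) else 0 := by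
      intro κ
      rw [MvPolynomial.coeff_sum]
      apply Finset.sum_congr rfl
      intro jc _
      rw [show (∏ i : Fin m, (X (i, jc) : MvPolynomial (Fin m × Fin n) K))
          = monomial (Dc univ (fun _ => jc)) 1 from prod_X_eq univ _,
        MvPolynomial.coeff_monomial]
    have hterm : ∀ j : Fin m → ZMod p,
        (if j 0 = 0 then
          (∑ jc : Fin n, ∏ i : Fin m, X (i, jc)
            : MvPolynomial (Fin m × Fin n) K).coeff (Dc univ (fun i => ι (j i)))
          else 0)
        = if j = 0 then 1 else 0 := by
      intro j
      by_cases hj0 : j = 0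
      · subst hj0
        rw [if_pos (show (0 : Fin m → ZMod p) 0 = 0 from rfl), if_pos rfl, hcoeff]
        have hiff : ∀ jc : Fin n,
            (Dc univ (fun _ => jc) = Dc univ (fun i => ι ((0 : Fin m → ZMod p) i)))
              ↔ jc = ι 0 := by
          intro jc
          constructor
          · intro h
            have h2 := congrFun (Dc_univ_inj h) 0
            simpa using h2
          · intro h
            subst h
            rfl
        rw [Finset.sum_congr rfl fun jc _ => if_congr (hiff jc) rfl rfl,
          Finset.sum_ite_eq' univ (ι 0) (fun _ => (1 : K))]
        simp
      · by_cases hj : j 0 = 0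
        · rw [if_pos hj, if_neg hj0, hcoeff]
          apply Finset.sum_eq_zero
          intro jc _
          rw [if_neg]
          intro hcontra
          apply hj0
          have hfun := Dc_univ_inj hcontra
          funext i
          have hi := congrFun hfun i
          have h0 := congrFun hfun 0
          rw [hj] at h0
          show j i = 0
          apply ιinj
          rw [← hi, h0]
        · rw [if_neg hj, if_neg hj0]
    rw [Finset.sum_congr rfl fun j _ => hterm j,
      Finset.sum_ite_eq' univ (0 : Fin m → ZMod p) (fun _ => (1 : K))]
    simp
  rw [hvanish] at hone
  exact one_ne_zero hone.symm
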